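/- The function P̃_{ν,i} extends continuously to the closed nonnegative orthant (ℝ≥0)^M, with value at points where p_i = 0 equal to Σ_{j∈N_i} (d_j · ln 2)/(K·B·g_{i,j}·ν_i) · (Σ_{k≠i} ν_k p_k g_{k,j} + σ²); the extension is concave and strictly positive. -/

import Mathlib

open Real Set Filter Topology

noncomputable def phiPF (t : ℝ) : ℝ := if t = 0 then 1 else t / Real.log (1 + t)

lemma phiPF_zero : phiPF 0 = 1 := by simp [phiPF]

lemma phiPF_pos_eq {t : ℝ} (ht : 0 < t) : phiPF t = t / Real.log (1 + t) := by
  simp [phiPF, ne_of_gt ht]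

lemma logPF_pos {t : ℝ} (ht : 0 < t) : 0 < Real.log (1 + t) :=
  Real.log_pos (by linarith)

lemma logPF_lb {t : ℝ} (ht : 0 ≤ t) : t / (1 + t) ≤ Real.log (1 + t) := by
  have h1 : (0:ℝ) < 1 + t := by linarith
  have h := Real.one_sub_inv_le_log_of_pos h1
  have h2 : 1 - (1+t)⁻¹ = t / (1+t) := by field_simp; ring
  rw [h2] at h; exact h

lemma logPF_ub {t : ℝ} (ht : 0 ≤ t) : Real.log (1 + t) ≤ t := by
  have h1 : (0:ℝ) < 1 + t := by linarith
  have := Real.log_le_sub_one_of_pos h1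
  linarith

lemma phiPF_bounds {t : ℝ} (ht : 0 ≤ t) : 1 ≤ phiPF t ∧ phiPF t ≤ 1 + t := by
  rcases eq_or_lt_of_le ht with h | h
  · simp [← h, phiPF]
  · have hL := logPF_pos h
    have h1 : (0:ℝ) < 1 + t := by linarith
    rw [phiPF_pos_eq h]
    constructor
    · rw [le_div_iff₀ hL]; simpa using logPF_ub ht
    · rw [div_le_iff₀ hL]
      have := (div_le_iff₀ h1).mp (logPF_lb ht)
      nlinarith



lemma hasDerivAt_logPF {t : ℝ} (ht : 0 < t) :
    HasDerivAt (fun x => Real.log (1 + x)) (1/(1+t)) t := by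
  have h1 : (1:ℝ) + t ≠ 0 := by positivity
  have := (Real.hasDerivAt_log h1).comp t ((hasDerivAt_id t).const_add 1)
  simpa [one_div, Function.comp_def] using this

lemma keyPF {t : ℝ} (ht : 0 ≤ t) : 2 * t ≤ (2 + t) * Real.log (1 + t) := by
  have hmono : MonotoneOn (fun x : ℝ => Real.log (1+x) - 2*x/(2+x)) (Ici 0) := by
    apply monotoneOn_of_hasDerivWithinAt_nonneg (convex_Ici 0)
      (f' := fun x => 1/(1+x) - 4/(2+x)^2)
    · apply ContinuousOn.sub
      · intro x hx
        have h1 : (1:ℝ) + x ≠ 0 := by simp at hx; positivity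
        exact ((Real.continuousAt_log h1).comp (by fun_prop)).continuousWithinAt
      · intro x hx
        have h2 : (2:ℝ) + x ≠ 0 := by simp at hx; positivity
        exact (((continuous_const.mul continuous_id).continuousAt).div (by fun_prop) h2).continuousWithinAt
    · intro x hx
      rw [interior_Ici] at hx
      have hx : (0:ℝ) < x := hx
      have h2 : (0:ℝ) < 2 + x := by linarith
      have hq : HasDerivAt (fun x : ℝ => 2*x/(2+x)) ((2*1*(2+x) - 2*x*1)/(2+x)^2) x := by
        have := ((hasDerivAt_id x).const_mul 2).div ((hasDerivAt_id x).const_add 2) (ne_of_gt h2)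
        simpa [Pi.div_def] using this
      have := (hasDerivAt_logPF hx).sub hq
      have heq : 1/(1+x) - 4/(2+x)^2 = 1/(1+x) - (2*1*(2+x) - 2*x*1)/(2+x)^2 := by ring_nf
      rw [heq]
      exact this.hasDerivWithinAt
    · intro x hx
      rw [interior_Ici] at hx
      have hx : (0:ℝ) < x := hx
      have h1 : (0:ℝ) < 1 + x := by linarith
      have h2 : (0:ℝ) < 2 + x := by linarith
      rw [sub_nonneg, div_le_div_iff₀ (by positivity) h1]
      nlinarith [sq_nonneg x]
  have h := hmono (self_mem_Ici) (mem_Ici.2 ht) ht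
  simp only [Real.log_one, add_zero, mul_zero, zero_div, sub_zero, zero_mul] at h
  have h2 : (0:ℝ) < 2 + t := by linarith
  rw [sub_nonneg, ← sub_nonneg] at h
  have := (div_le_iff₀ h2).mp (by linarith : 2*t/(2+t) ≤ Real.log (1+t))
  nlinarith


noncomputable def phiPF' (t : ℝ) : ℝ :=
  (Real.log (1+t) - t/(1+t)) / (Real.log (1+t))^2

lemma hasDerivAt_phiPF {t : ℝ} (ht : 0 < t) : HasDerivAt phiPF (phiPF' t) t := by
  have hL := logPF_pos ht
  have hpsi : HasDerivAt (fun x => x / Real.log (1+x))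
      ((1 * Real.log (1+t) - t * (1/(1+t))) / (Real.log (1+t))^2) t :=
    (hasDerivAt_id t).div (hasDerivAt_logPF ht) (ne_of_gt hL)
  have heq : phiPF =ᶠ[𝓝 t] fun x => x / Real.log (1+x) := by
    filter_upwards [eventually_gt_nhds ht] with x hx
    simp [phiPF, ne_of_gt hx]
  have h := hpsi.congr_of_eventuallyEq heq
  refine h.congr_deriv ?_
  unfold phiPF'
  rw [one_mul, mul_one_div]

noncomputable def phiPF'' (t : ℝ) : ℝ :=
  ((1/(1+t) - 1/(1+t)^2) * (Real.log (1+t))^2 -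
    (Real.log (1+t) - t/(1+t)) * (2 * Real.log (1+t) * (1/(1+t)))) / ((Real.log (1+t))^2)^2

lemma hasDerivAt_phiPF' {t : ℝ} (ht : 0 < t) : HasDerivAt phiPF' (phiPF'' t) t := by
  have hL := logPF_pos ht
  have h1 : (0:ℝ) < 1 + t := by linarith
  have hu : HasDerivAt (fun x => Real.log (1+x) - x/(1+x)) (1/(1+t) - 1/(1+t)^2) t := by
    have hq : HasDerivAt (fun x : ℝ => x/(1+x)) ((1*(1+t) - t*1)/(1+t)^2) t :=
      (hasDerivAt_id t).div ((hasDerivAt_id t).const_add 1) (ne_of_gt h1)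
    have heq : 1/(1+t) - 1/(1+t)^2 = 1/(1+t) - (1*(1+t) - t*1)/(1+t)^2 := by
      field_simp
      ring
    rw [heq]
    exact (hasDerivAt_logPF ht).sub hq
  have hv : HasDerivAt (fun x => (Real.log (1+x))^2) (2 * Real.log (1+t) * (1/(1+t))) t := by
    have := (hasDerivAt_logPF ht).pow 2
    simpa [Pi.pow_def] using this
  exact hu.div hv (by positivity)

lemma phiPF''_nonpos {t : ℝ} (ht : 0 < t) : phiPF'' t ≤ 0 := by
  have hL := logPF_pos ht
  have h1 : (0:ℝ) < 1 + t := by linarith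
  have hkey := keyPF ht.le
  unfold phiPF''
  apply div_nonpos_of_nonpos_of_nonneg _ (by positivity)
  have heq : (1/(1+t) - 1/(1+t)^2) * (Real.log (1+t))^2 -
      (Real.log (1+t) - t/(1+t)) * (2 * Real.log (1+t) * (1/(1+t)))
      = (Real.log (1+t) * (2*t - (2+t) * Real.log (1+t))) / (1+t)^2 := by
    field_simp
    ring
  rw [heq]
  apply div_nonpos_of_nonpos_of_nonneg _ (by positivity)
  exact mul_nonpos_of_nonneg_of_nonpos hL.le (by linarith)

lemma phiPF_contOn : ContinuousOn phiPF (Ici 0) := by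
  intro t ht
  rcases eq_or_lt_of_le (mem_Ici.mp ht) with h | h
  · rw [← h]
    have h0 : phiPF 0 = 1 := phiPF_zero
    refine ContinuousWithinAt.mono ?_ (subset_refl _)
    show Tendsto phiPF (𝓝[Ici 0] 0) (𝓝 (phiPF 0))
    rw [h0]
    apply tendsto_of_tendsto_of_tendsto_of_le_of_le'
      (tendsto_const_nhds : Tendsto (fun _ : ℝ => (1:ℝ)) _ _)
      (f := phiPF) (h := fun x => 1 + x)
    · have : Tendsto (fun x : ℝ => 1 + x) (𝓝[Ici 0] 0) (𝓝 (1 + 0)) :=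
        ((continuous_const.add continuous_id).tendsto 0).mono_left nhdsWithin_le_nhds
      simpa using this
    · filter_upwards [eventually_mem_nhdsWithin] with x hx
      exact (phiPF_bounds (mem_Ici.mp hx)).1
    · filter_upwards [eventually_mem_nhdsWithin] with x hx
      exact (phiPF_bounds (mem_Ici.mp hx)).2
  · exact (hasDerivAt_phiPF h).differentiableAt.continuousAt.continuousWithinAt

lemma phiPF_concave : ConcaveOn ℝ (Ici 0) phiPF := by
  apply concaveOn_of_hasDerivWithinAt2_nonpos (convex_Ici 0) phiPF_contOn
    (f' := phiPF') (f'' := phiPF'')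
  · intro x hx; rw [interior_Ici] at hx
    exact (hasDerivAt_phiPF hx).hasDerivWithinAt
  · intro x hx; rw [interior_Ici] at hx
    exact (hasDerivAt_phiPF' hx).hasDerivWithinAt
  · intro x hx; rw [interior_Ici] at hx
    exact phiPF''_nonpos hx

noncomputable def GfPF (x c : ℝ) : ℝ := c * phiPF (x / c)

lemma GfPF_bounds {x c : ℝ} (hx : 0 ≤ x) (hc : 0 < c) :
    c ≤ GfPF x c ∧ GfPF x c ≤ c + x := by
  have ht : 0 ≤ x / c := div_nonneg hx hc.le
  obtain ⟨h1, h2⟩ := phiPF_bounds ht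
  constructor
  · calc c = c * 1 := (mul_one c).symm
      _ ≤ c * phiPF (x/c) := by nlinarith
  · calc c * phiPF (x/c) ≤ c * (1 + x/c) := by nlinarith
      _ = c + x := by field_simp

lemma GfPF_zero {c : ℝ} : GfPF 0 c = c := by
  simp [GfPF, phiPF]

lemma GfPF_pos_eq {x c : ℝ} (hx : 0 < x) (hc : 0 < c) :
    GfPF x c = x / Real.log (1 + x / c) := by
  have ht : 0 < x / c := div_pos hx hc
  rw [GfPF, phiPF_pos_eq ht]
  have hxc : c * (x/c) = x := by field_simp
  rw [← mul_div_assoc, hxc]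

lemma GfPF_concave_ineq {x1 c1 x2 c2 a b : ℝ} (hx1 : 0 ≤ x1) (hc1 : 0 < c1)
    (hx2 : 0 ≤ x2) (hc2 : 0 < c2) (ha : 0 ≤ a) (hb : 0 ≤ b) (hab : a + b = 1) :
    a * GfPF x1 c1 + b * GfPF x2 c2 ≤ GfPF (a*x1 + b*x2) (a*c1 + b*c2) := by
  set C := a*c1 + b*c2 with hCdef
  have hC : 0 < C := by
    rcases eq_or_lt_of_le ha with h | h
    · have hb1 : b = 1 := by linarith
      rw [hCdef, ← h, hb1]
      simpa using hc2
    · nlinarith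
  have hα : 0 ≤ a*c1/C := by positivity
  have hβ : 0 ≤ b*c2/C := by positivity
  have hs : a*c1/C + b*c2/C = 1 := by field_simp; linarith
  have hm1 : x1/c1 ∈ Ici (0:ℝ) := mem_Ici.mpr (div_nonneg hx1 hc1.le)
  have hm2 : x2/c2 ∈ Ici (0:ℝ) := mem_Ici.mpr (div_nonneg hx2 hc2.le)
  have hconc := phiPF_concave.2 hm1 hm2 hα hβ hs
  simp only [smul_eq_mul] at hconc
  have hmix : (a*c1/C) * (x1/c1) + (b*c2/C) * (x2/c2) = (a*x1 + b*x2)/C := by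
    field_simp
  rw [hmix] at hconc
  have step1 : a * GfPF x1 c1 + b * GfPF x2 c2
      = C * ((a*c1/C) * phiPF (x1/c1) + (b*c2/C) * phiPF (x2/c2)) := by
    unfold GfPF
    field_simp
  rw [step1]
  unfold GfPF
  exact mul_le_mul_of_nonneg_left hconc hC.le

lemma GfPF_contOn :
    ContinuousOn (fun q : ℝ × ℝ => GfPF q.1 q.2) {q : ℝ × ℝ | 0 ≤ q.1 ∧ 0 < q.2} := by
  intro q hq
  obtain ⟨hq1, hq2⟩ := hq
  rcases eq_or_lt_of_le hq1 with h | h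
  · -- q.1 = 0 : squeeze
    show Tendsto (fun p : ℝ × ℝ => GfPF p.1 p.2) _ (𝓝 (GfPF q.1 q.2))
    have hval : GfPF q.1 q.2 = q.2 := by rw [← h, GfPF_zero]
    rw [hval]
    apply tendsto_of_tendsto_of_tendsto_of_le_of_le'
      (g := fun p : ℝ × ℝ => p.2) (h := fun p : ℝ × ℝ => p.2 + p.1)
    · exact (continuous_snd.tendsto q).mono_left nhdsWithin_le_nhds
    · have : Tendsto (fun p : ℝ × ℝ => p.2 + p.1) (𝓝 q) (𝓝 (q.2 + q.1)) :=
        (continuous_snd.add continuous_fst).tendsto q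
      have h2 : q.2 + q.1 = q.2 := by rw [← h]; ring
      rw [h2] at this
      exact this.mono_left nhdsWithin_le_nhds
    · filter_upwards [eventually_mem_nhdsWithin] with p hp
      exact (GfPF_bounds hp.1 hp.2).1
    · filter_upwards [eventually_mem_nhdsWithin] with p hp
      exact (GfPF_bounds hp.1 hp.2).2
  · -- q.1 > 0 : continuous at
    apply ContinuousAt.continuousWithinAt
    have ht : 0 < q.1 / q.2 := div_pos h hq2
    have hphi : ContinuousAt phiPF (q.1 / q.2) :=
      (hasDerivAt_phiPF ht).differentiableAt.continuousAt
    have hdiv : ContinuousAt (fun p : ℝ × ℝ => p.1 / p.2) q :=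
      continuousAt_fst.div continuousAt_snd (ne_of_gt hq2)
    have hcomp : ContinuousAt (fun p : ℝ × ℝ => phiPF (p.1 / p.2)) q :=
      ContinuousAt.comp (g := phiPF) (f := fun p : ℝ × ℝ => p.1 / p.2) hphi hdiv
    exact continuousAt_snd.mul hcomp

theorem power_function_extension (M N : ℕ) (i : Fin M)
    (Ni : Finset (Fin N)) (hNi : Ni.Nonempty)
    (d : Fin N → ℝ) (g : Fin M → Fin N → ℝ)
    (ν : Fin M → ℝ) (B K σ2 : ℝ)
    (hν : ∀ k, 0 < ν k) (hd : ∀ j, 0 < d j) (hg : ∀ k j, 0 < g k j)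
    (hB : 0 < B) (hK : 0 < K) (hσ : 0 < σ2) :
    ∃ F : (Fin M → ℝ) → ℝ,
      ContinuousOn F {p : Fin M → ℝ | ∀ k, 0 ≤ p k} ∧
      (∀ p : Fin M → ℝ, (∀ k, 0 < p k) →
        F p = (p i / ν i) * ∑ j ∈ Ni, d j / (K * B *
          (Real.log (1 + p i * g i j /
            (∑ k ∈ Finset.univ.erase i, ν k * p k * g k j + σ2)) / Real.log 2))) ∧
      (∀ p : Fin M → ℝ, (∀ k, 0 ≤ p k) → p i = 0 →
        F p = ∑ j ∈ Ni, (d j * Real.log 2) / (K * B * g i j * ν i) *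
          (∑ k ∈ Finset.univ.erase i, ν k * p k * g k j + σ2)) ∧
      ConcaveOn ℝ {p : Fin M → ℝ | ∀ k, 0 ≤ p k} F ∧
      (∀ p : Fin M → ℝ, (∀ k, 0 ≤ p k) → 0 < F p) := by
  have hlog2 : 0 < Real.log 2 := Real.log_pos one_lt_two
  have hApos : ∀ j, 0 < d j * Real.log 2 / (K * B * g i j * ν i) := fun j =>
    div_pos (mul_pos (hd j) hlog2) (mul_pos (mul_pos (mul_pos hK hB) (hg i j)) (hν i))
  have hIpos : ∀ (j : Fin N) (p : Fin M → ℝ), (∀ k, 0 ≤ p k) →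
      0 < ∑ k ∈ Finset.univ.erase i, ν k * p k * g k j + σ2 := by
    intro j p hp
    have : 0 ≤ ∑ k ∈ Finset.univ.erase i, ν k * p k * g k j :=
      Finset.sum_nonneg fun k _ => mul_nonneg (mul_nonneg (hν k).le (hp k)) (hg k j).le
    linarith
  refine ⟨fun p => ∑ j ∈ Ni, d j * Real.log 2 / (K * B * g i j * ν i) *
      GfPF (p i * g i j) (∑ k ∈ Finset.univ.erase i, ν k * p k * g k j + σ2),
    ?_, ?_, ?_, ?_, ?_⟩
  · -- Continuity
    apply continuousOn_finset_sum
    intro j _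
    apply ContinuousOn.mul continuousOn_const
    have hmaps : MapsTo
        (fun p : Fin M → ℝ => (p i * g i j, ∑ k ∈ Finset.univ.erase i, ν k * p k * g k j + σ2))
        {p : Fin M → ℝ | ∀ k, 0 ≤ p k} {q : ℝ × ℝ | 0 ≤ q.1 ∧ 0 < q.2} := by
      intro p hp
      exact ⟨mul_nonneg (hp i) (hg i j).le, hIpos j p hp⟩
    have hcont : ContinuousOn
        (fun p : Fin M → ℝ => (p i * g i j, ∑ k ∈ Finset.univ.erase i, ν k * p k * g k j + σ2))
        {p : Fin M → ℝ | ∀ k, 0 ≤ p k} := by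
      apply Continuous.continuousOn
      apply Continuous.prodMk
      · exact (continuous_apply i).mul continuous_const
      · exact (continuous_finset_sum _ fun k _ =>
          ((continuous_const.mul (continuous_apply k)).mul continuous_const)).add continuous_const
    exact ContinuousOn.comp GfPF_contOn hcont hmaps
  · -- Interior formula
    intro p hp
    rw [Finset.mul_sum]
    apply Finset.sum_congr rfl
    intro j _
    have hp' : ∀ k, 0 ≤ p k := fun k => (hp k).le
    have hI := hIpos j p hp'
    have hx : 0 < p i * g i j := mul_pos (hp i) (hg i j)
    rw [GfPF_pos_eq hx hI]
    set L := Real.log (1 + p i * g i j /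
        (∑ k ∈ Finset.univ.erase i, ν k * p k * g k j + σ2)) with hLdef
    have hL : 0 < L := by
      rw [hLdef]
      exact logPF_pos (div_pos hx hI)
    rw [show K * B * (L / Real.log 2) = K * B * L / Real.log 2 by ring, div_div_eq_mul_div,
      div_mul_div_comm, div_mul_div_comm,
      div_eq_div_iff
        (mul_pos (mul_pos (mul_pos (mul_pos hK hB) (hg i j)) (hν i)) hL).ne'
        (mul_pos (hν i) (mul_pos (mul_pos hK hB) hL)).ne']
    ring
  · -- Boundary formula
    intro p hp hpi
    apply Finset.sum_congr rfl
    intro j _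
    rw [hpi, zero_mul, GfPF_zero]
  · -- Concavity
    constructor
    · intro p hp q hq a b ha hb hab
      intro k
      have h1 : 0 ≤ p k := hp k
      have h2 : 0 ≤ q k := hq k
      simp only [Pi.add_apply, Pi.smul_apply, smul_eq_mul]
      nlinarith
    · intro p hp q hq a b ha hb hab
      have hp' : ∀ k, 0 ≤ p k := hp
      have hq' : ∀ k, 0 ≤ q k := hq
      simp only [smul_eq_mul]
      rw [Finset.mul_sum, Finset.mul_sum, ← Finset.sum_add_distrib]
      apply Finset.sum_le_sum
      intro j _
      have hxp : 0 ≤ p i * g i j := mul_nonneg (hp' i) (hg i j).le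
      have hxq : 0 ≤ q i * g i j := mul_nonneg (hq' i) (hg i j).le
      have hkey := GfPF_concave_ineq hxp (hIpos j p hp') hxq (hIpos j q hq') ha hb hab
      have e1 : (a • p + b • q) i * g i j = a * (p i * g i j) + b * (q i * g i j) := by
        simp only [Pi.add_apply, Pi.smul_apply, smul_eq_mul]
        ring
      have e2 : ∑ k ∈ Finset.univ.erase i, ν k * (a • p + b • q) k * g k j + σ2
          = a * (∑ k ∈ Finset.univ.erase i, ν k * p k * g k j + σ2)
            + b * (∑ k ∈ Finset.univ.erase i, ν k * q k * g k j + σ2) := by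
        simp only [Pi.add_apply, Pi.smul_apply, smul_eq_mul]
        rw [Finset.sum_congr rfl (fun k _ => by ring :
          ∀ k ∈ Finset.univ.erase i, ν k * (a * p k + b * q k) * g k j
            = a * (ν k * p k * g k j) + b * (ν k * q k * g k j)),
          Finset.sum_add_distrib, ← Finset.mul_sum, ← Finset.mul_sum]
        linear_combination (-σ2) * hab
      calc a * (d j * Real.log 2 / (K * B * g i j * ν i) *
              GfPF (p i * g i j) (∑ k ∈ Finset.univ.erase i, ν k * p k * g k j + σ2))
            + b * (d j * Real.log 2 / (K * B * g i j * ν i) *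
              GfPF (q i * g i j) (∑ k ∈ Finset.univ.erase i, ν k * q k * g k j + σ2))
          = d j * Real.log 2 / (K * B * g i j * ν i) *
              (a * GfPF (p i * g i j) (∑ k ∈ Finset.univ.erase i, ν k * p k * g k j + σ2)
               + b * GfPF (q i * g i j) (∑ k ∈ Finset.univ.erase i, ν k * q k * g k j + σ2)) := by
            ring
        _ ≤ d j * Real.log 2 / (K * B * g i j * ν i) *
              GfPF (a * (p i * g i j) + b * (q i * g i j))
                (a * (∑ k ∈ Finset.univ.erase i, ν k * p k * g k j + σ2)
                 + b * (∑ k ∈ Finset.univ.erase i, ν k * q k * g k j + σ2)) :=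
            mul_le_mul_of_nonneg_left hkey (hApos j).le
        _ = d j * Real.log 2 / (K * B * g i j * ν i) *
              GfPF ((a • p + b • q) i * g i j)
                (∑ k ∈ Finset.univ.erase i, ν k * (a • p + b • q) k * g k j + σ2) := by
            rw [e1, e2]
  · -- Positivity
    intro p hp
    apply Finset.sum_pos _ hNi
    intro j _
    have hI := hIpos j p hp
    have hb := (GfPF_bounds (mul_nonneg (hp i) (hg i j).le) hI).1
    exact mul_pos (hApos j) (lt_of_lt_of_le hI hb)
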